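/- arXiv:1905.06507 — 6 statements merged into one kernel-verified Lean document; each statement's English description precedes it below -/
import Mathlib

section
/- Let r ≥ 3 and let x : (0,∞) → H be a twice continuously differentiable solution of the FISC-ODE ẍ(t) + (r/t)ẋ(t) + ∇f(x(t)) + ((r-3)/t)(‖ẋ(t)‖/‖∇f(x(t))‖)∇f(x(t)) = 0, with ∇f(x(t)) ≠ 0 for all t > 0. Then the Lyapunov function E(t) = ((ω-2ω²)t²/4)‖ẋ(t)‖² + (1/2)‖x(t) - x* + ω t ẋ(t)‖² + (ω t²/2)(f(x(t)) - f(x*)), where ω = 1/(r-1), is non-increasing: its derivative satisfies Ė(t) ≤ 0 for all t > 0. -/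
open Set

set_option maxHeartbeats 1000000 in
/-- Lyapunov function for the FISC-ODE: if `x` is a twice continuously differentiable
solution of `ẍ + (r/t)ẋ + ∇f(x) + ((r-3)/t)(‖ẋ‖/‖∇f(x)‖)∇f(x) = 0` on `(0,∞)`
with `∇f(x(t)) ≠ 0`, then the Lyapunov function
`E(t) = ((ω-2ω²)t²/4)‖ẋ‖² + (1/2)‖x - x* + ωtẋ‖² + (ωt²/2)(f(x) - f(x*))`,
with `ω = 1/(r-1)`, has non-positive derivative on `(0,∞)`. -/
theorem fisc_ode_lyapunov_nonincreasing {H : Type*} [NormedAddCommGroup H]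
    [InnerProductSpace ℝ H] [CompleteSpace H]
    (f : H → ℝ) (f' : H → H)
    (hconv : ConvexOn ℝ Set.univ f)
    (hgrad : ∀ z, HasGradientAt f (f' z) z)
    (hbdd : BddBelow (Set.range f))
    (xstar : H) (hmin : ∀ z, f xstar ≤ f z)
    (huniq : ∀ z, (∀ w, f z ≤ f w) → z = xstar)
    (r : ℝ) (hr : 3 ≤ r)
    (x x' x'' : ℝ → H)
    (hx' : ∀ t ∈ Ioi (0 : ℝ), HasDerivAt x (x' t) t)
    (hx'' : ∀ t ∈ Ioi (0 : ℝ), HasDerivAt x' (x'' t) t)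
    (hx''cont : ContinuousOn x'' (Ioi 0))
    (hgradne : ∀ t ∈ Ioi (0 : ℝ), f' (x t) ≠ 0)
    (hode : ∀ t ∈ Ioi (0 : ℝ),
      x'' t + (r / t) • x' t + f' (x t)
        + ((r - 3) / t) • ((‖x' t‖ / ‖f' (x t)‖) • f' (x t)) = 0)
    (ω : ℝ) (hω : ω = 1 / (r - 1))
    (E : ℝ → ℝ)
    (hE : ∀ t, E t = ((ω - 2 * ω ^ 2) * t ^ 2 / 4) * ‖x' t‖ ^ 2
        + (1 / 2) * ‖x t - xstar + (ω * t) • x' t‖ ^ 2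
        + (ω * t ^ 2 / 2) * (f (x t) - f xstar)) :
    ∀ t ∈ Ioi (0 : ℝ), deriv E t ≤ 0 := by
  intro t ht
  have htpos : (0:ℝ) < t := ht
  -- subgradient inequality for convex f
  have hsubgrad : ∀ a b : H, f a + @inner ℝ _ _ (f' a) (b - a) ≤ f b := by
    intro a b
    rcases eq_or_ne b a with rfl | hne
    · simp
    set c : ℝ → H := fun s => a + s • (b - a) with hc
    have hφconv : ConvexOn ℝ Set.univ (fun s => f (c s)) := by
      have := hconv.comp_affineMap (AffineMap.lineMap a b : ℝ →ᵃ[ℝ] H)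
      simp only [Set.preimage_univ] at this
      have heq : (fun s => f (c s)) = f ∘ ⇑(AffineMap.lineMap a b : ℝ →ᵃ[ℝ] H) := by
        funext s
        simp [hc, AffineMap.lineMap_apply]
        abel
      rw [heq]; exact this
    have hcd : HasDerivAt c (b - a) 0 := by
      simpa [hc] using ((hasDerivAt_id (0:ℝ)).smul_const (b - a)).const_add a
    have hφd : HasDerivAt (fun s => f (c s)) (@inner ℝ _ _ (f' a) (b - a)) 0 := by
      have hg0 : HasGradientAt f (f' a) (c 0) := by simpa [hc] using hgrad a
      have := (hasGradientAt_iff_hasFDerivAt.mp hg0).comp_hasDerivAt 0 hcd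
      simpa [InnerProductSpace.toDual_apply_apply, Function.comp_def] using this
    have := hφconv.le_slope_of_hasDerivAt (mem_univ (0:ℝ)) (mem_univ (1:ℝ)) one_pos hφd
    rw [slope_def_field] at this
    simp only [hc, one_smul, zero_smul, add_zero] at this
    have hc1 : a + (b - a) = b := by abel
    rw [hc1] at this
    linarith
  -- the derivative of E at t
  have hEfun : E = fun s => ((ω - 2*ω^2)/4) * (s^2 * @inner ℝ _ _ (x' s) (x' s))
      + (1/2) * @inner ℝ _ _ (x s - xstar + (ω*s)•x' s) (x s - xstar + (ω*s)•x' s)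
      + (ω/2) * (s^2 * (f (x s) - f xstar)) := by
    funext s
    rw [hE s, ← real_inner_self_eq_norm_sq, ← real_inner_self_eq_norm_sq]
    ring
  have hsq : HasDerivAt (fun s : ℝ => s^2) (2*t) t := by
    simpa using hasDerivAt_pow 2 t
  have hu2 : HasDerivAt (fun s => @inner ℝ _ _ (x' s) (x' s))
      (@inner ℝ _ _ (x' t) (x'' t) + @inner ℝ _ _ (x'' t) (x' t)) t :=
    (hx'' t ht).inner ℝ (hx'' t ht)
  have hquad := hsq.mul hu2
  have hωs : HasDerivAt (fun s : ℝ => ω * s) ω t := by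
    simpa using (hasDerivAt_id t).const_mul ω
  have hw : HasDerivAt (fun s => x s - xstar + (ω*s)•x' s)
      (x' t + ((ω*t)•x'' t + ω•x' t)) t :=
    ((hx' t ht).sub_const xstar).add (hωs.smul (hx'' t ht))
  have hwin := hw.inner ℝ hw
  have hfx : HasDerivAt (fun s => f (x s)) (@inner ℝ _ _ (f' (x t)) (x' t)) t := by
    have := (hasGradientAt_iff_hasFDerivAt.mp (hgrad (x t))).comp_hasDerivAt t (hx' t ht)
    simpa [InnerProductSpace.toDual_apply_apply, Function.comp_def] using this
  have hlast := hsq.mul (hfx.sub_const (f xstar))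
  have hD := ((hquad.const_mul ((ω - 2*ω^2)/4)).add (hwin.const_mul (1/2))).add
    (hlast.const_mul (ω/2))
  rw [hEfun]
  erw [hD.deriv]
  -- abbreviations
  set U := ‖x' t‖ with hUdef
  set G := ‖f' (x t)‖ with hGdef
  set B := @inner ℝ _ _ (f' (x t)) (x' t) with hBdef
  set C := @inner ℝ _ _ (f' (x t)) (x t - xstar) with hCdef
  set Dd := @inner ℝ _ _ (x' t) (x t - xstar) with hDddef
  set F := f (x t) - f xstar with hFdef
  have hGpos : 0 < G := norm_pos_iff.2 (hgradne t ht)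
  have hUpos : 0 ≤ U := norm_nonneg _
  -- ODE rearranged
  have ha : x'' t = -((r/t) • x' t + (f' (x t) + ((r-3)/t) • ((U/G) • f' (x t)))) := by
    have h := hode t ht
    rw [add_assoc, add_assoc] at h
    exact eq_neg_of_add_eq_zero_left h
  -- inner products with x'' t
  have hA : @inner ℝ _ _ (x' t) (x' t) = U^2 := real_inner_self_eq_norm_sq _
  have hP2 : @inner ℝ _ _ (x'' t) (x' t)
      = -(r/t*U^2) - B - ((r-3)/t)*((U/G)*B) := by
    rw [ha]
    simp only [inner_neg_left, inner_add_left, real_inner_smul_left, hA,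
      ← hBdef]
    ring
  have hP1 : @inner ℝ _ _ (x' t) (x'' t)
      = -(r/t*U^2) - B - ((r-3)/t)*((U/G)*B) := by
    rw [real_inner_comm, hP2]
  have hQ2 : @inner ℝ _ _ (x'' t) (x t - xstar)
      = -(r/t*Dd) - C - ((r-3)/t)*((U/G)*C) := by
    rw [ha]
    simp only [inner_neg_left, inner_add_left, real_inner_smul_left, ← hDddef, ← hCdef]
    ring
  have hQ1 : @inner ℝ _ _ (x t - xstar) (x'' t)
      = -(r/t*Dd) - C - ((r-3)/t)*((U/G)*C) := by
    rw [real_inner_comm, hQ2]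
  have hDd1 : @inner ℝ _ _ (x t - xstar) (x' t) = Dd := by
    rw [real_inner_comm, hDddef]
  -- scalar bounds
  have hCS := abs_real_inner_le_norm (f' (x t)) (x' t)
  have hB1 : -(G*U) ≤ B := by
    have := neg_abs_le B
    rw [← hBdef, ← hUdef, ← hGdef] at hCS
    linarith
  have hF : 0 ≤ F := sub_nonneg.2 (hmin (x t))
  have hFC : F ≤ C := by
    have h := hsubgrad (x t) xstar
    have hflip : xstar - x t = -(x t - xstar) := by abel
    rw [hflip, inner_neg_right, ← hCdef] at h
    rw [hFdef]
    linarith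
  -- expand the derivative into scalars
  have hexp : (ω - 2*ω^2)/4 * ((2*t) * @inner ℝ _ _ (x' t) (x' t)
        + t^2 * (@inner ℝ _ _ (x' t) (x'' t) + @inner ℝ _ _ (x'' t) (x' t)))
      + 1/2 * (@inner ℝ _ _ (x t - xstar + (ω*t)•x' t) (x' t + ((ω*t)•x'' t + ω•x' t))
        + @inner ℝ _ _ (x' t + ((ω*t)•x'' t + ω•x' t)) (x t - xstar + (ω*t)•x' t))
      + ω/2 * ((2*t) * (f (x t) - f xstar) + t^2 * @inner ℝ _ _ (f' (x t)) (x' t))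
      = (ω/(2*G)) * (-(r-3)*t*(G*U^2 + U*B) - 2*(t*G + (r-3)*U)*C + 2*t*G*F) := by
    simp only [inner_add_left, inner_add_right, real_inner_smul_left, real_inner_smul_right,
      hA, hP1, hP2, hQ1, hQ2, hDd1, ← hBdef, ← hCdef, ← hDddef, ← hFdef]
    rw [hω]
    have hr1 : r - 1 ≠ 0 := by intro h0; linarith
    field_simp
    ring
  rw [hexp]
  -- conclude nonpositivity
  have h1 : -(r-3)*t*(G*U^2 + U*B) ≤ 0 := by
    nlinarith [mul_nonneg (mul_nonneg (mul_nonneg (sub_nonneg.2 hr) htpos.le) hUpos)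
      (by nlinarith : (0:ℝ) ≤ G*U + B)]
  have h2 : -2*(t*G + (r-3)*U)*C + 2*t*G*F ≤ 0 := by
    nlinarith [mul_nonneg (mul_nonneg htpos.le hGpos.le) (sub_nonneg.2 hFC),
      mul_nonneg (mul_nonneg (sub_nonneg.2 hr) hUpos) (le_trans hF hFC)]
  have hωpos : 0 < ω := by rw [hω]; exact one_div_pos.2 (by linarith)
  have hpos : (0:ℝ) < ω/(2*G) := by positivity
  have hS : -(r-3)*t*(G*U^2 + U*B) - 2*(t*G + (r-3)*U)*C + 2*t*G*F ≤ 0 := by linarith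
  calc (ω/(2*G)) * (-(r-3)*t*(G*U^2 + U*B) - 2*(t*G + (r-3)*U)*C + 2*t*G*F)
      ≤ (ω/(2*G)) * 0 := mul_le_mul_of_nonneg_left hS hpos.le
    _ = 0 := mul_zero _
end

section
/- Let r ≥ 3 and let x : [0,∞) → H be a twice continuously differentiable solution of the FISC-ODE ẍ(t) + (r/t)ẋ(t) + ∇f(x(t)) + ((r-3)/t)(‖ẋ(t)‖/‖∇f(x(t))‖)∇f(x(t)) = 0 on (0,∞), with ∇f(x(t)) ≠ 0 for all t > 0, satisfying the initial conditions x(0) = x₀ and ẋ(0) = 0. Then for all t > 0, f(x(t)) - f(x*) ≤ (r-1)‖x₀ - x*‖²/t². -/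
open Set Filter
open scoped RealInnerProductSpace Topology

section aux
variable {H : Type*} [NormedAddCommGroup H] [InnerProductSpace ℝ H] [CompleteSpace H]

theorem grad_convex_sub {f : H → ℝ} (hconv : ConvexOn ℝ Set.univ f) {a b g : H}
    (hg : HasGradientAt f g a) : f a + ⟪g, b - a⟫ ≤ f b := by
  set φ : ℝ → ℝ := fun τ => f (a + τ • (b - a)) with hφdef
  have hcurve : HasDerivAt (fun τ : ℝ => a + τ • (b - a)) (b - a) 0 := by
    simpa using ((hasDerivAt_id (0:ℝ)).smul_const (b - a)).const_add a
  have hφ : HasDerivAt φ ⟪g, b - a⟫ 0 := by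
    have hga : HasFDerivAt f ((InnerProductSpace.toDual ℝ H) g) ((fun τ : ℝ => a + τ • (b - a)) 0) := by
      simpa using hg.hasFDerivAt
    have h2 := hga.comp_hasDerivAt 0 hcurve
    simp [hφdef, InnerProductSpace.toDual_apply_apply] at h2
    exact h2
  have hφ0 : φ 0 = f a := by simp [hφdef]
  have hslope : ∀ᶠ τ in 𝓝[>] (0:ℝ), slope φ 0 τ ≤ f b - f a := by
    filter_upwards [Ioo_mem_nhdsGT_of_mem (by constructor <;> norm_num : (0:ℝ) ∈ Ico (0:ℝ) 1)] with τ hτ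
    have h1 : φ τ ≤ (1 - τ) * f a + τ * f b := by
      have := hconv.2 (mem_univ a) (mem_univ b) (by linarith [hτ.2] : (0:ℝ) ≤ 1 - τ)
        (le_of_lt hτ.1) (by ring)
      have heq : (1 - τ) • a + τ • b = a + τ • (b - a) := by module
      simpa [heq] using this
    rw [slope_def_field]
    rw [sub_zero, div_le_iff₀ hτ.1]
    nlinarith [h1, hφ0]
  have htend : Tendsto (slope φ 0) (𝓝[>] (0:ℝ)) (𝓝 ⟪g, b - a⟫) :=
    (hasDerivAt_iff_tendsto_slope.1 hφ).mono_left (nhdsWithin_mono _ fun y hy => ne_of_gt hy)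
  have := le_of_tendsto htend hslope
  linarith [this, hφ0.symm ▸ this]

set_option maxHeartbeats 2000000 in
theorem fisc_main
    (f : H → ℝ) (f' : H → H)
    (hconv : ConvexOn ℝ Set.univ f)
    (hgrad : ∀ z, HasGradientAt f (f' z) z)
    (xstar : H) (hmin : ∀ z, f xstar ≤ f z)
    (r : ℝ) (hr : 3 ≤ r)
    (x x' x'' : ℝ → H)
    (hx' : ∀ t ∈ Ici (0 : ℝ), HasDerivWithinAt x (x' t) (Ici 0) t)
    (hx'' : ∀ t ∈ Ici (0 : ℝ), HasDerivWithinAt x' (x'' t) (Ici 0) t)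
    (hgradne : ∀ t ∈ Ioi (0 : ℝ), f' (x t) ≠ 0)
    (hode : ∀ t ∈ Ioi (0 : ℝ),
      x'' t + (r / t) • x' t + f' (x t)
        + ((r - 3) / t) • ((‖x' t‖ / ‖f' (x t)‖) • f' (x t)) = 0)
    (x₀ : H) (hx0 : x 0 = x₀) (hv0 : x' 0 = 0) :
    ∀ t ∈ Ioi (0 : ℝ), f (x t) - f xstar ≤ (r - 1) * ‖x₀ - xstar‖ ^ 2 / t ^ 2 := by
  have hr1 : (0:ℝ) < r - 1 := by linarith
  have hr3 : (0:ℝ) ≤ r - 3 := by linarith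
  set u : ℝ → H := fun t => (r-1) • (x t - xstar) + t • x' t with hu
  set E : ℝ → ℝ := fun t => (r-1) * (t^2 * (f (x t) - f xstar)) + ⟪u t, u t⟫
      + (r-3)/2 * (t^2 * ⟪x' t, x' t⟫) with hE
  set D : ℝ → ℝ := fun t => 2*(r-1)*t*(f (x t) - f xstar)
      - 2*(r-1)*t*⟪x t - xstar, f' (x t)⟫
      - 2*(r-1)*(r-3)*((‖x' t‖/‖f' (x t)‖)*⟪x t - xstar, f' (x t)⟫)
      - (r-1)*(r-3)*t*((‖x' t‖/‖f' (x t)‖)*⟪x' t, f' (x t)⟫ + ⟪x' t, x' t⟫) with hD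
  -- derivative of E on Ioi 0
  have hderiv : ∀ t ∈ Ioi (0:ℝ), HasDerivAt E (D t) t := by
    intro t ht
    have ht0 : (0:ℝ) < t := ht
    have htne : t ≠ 0 := ne_of_gt ht0
    have hgn : ‖f' (x t)‖ ≠ 0 := norm_ne_zero_iff.2 (hgradne t ht)
    have hmem : Ici (0:ℝ) ∈ 𝓝 t := Ici_mem_nhds ht0
    have hxd : HasDerivAt x (x' t) t := (hx' t ht0.le).hasDerivAt hmem
    have hvd : HasDerivAt x' (x'' t) t := (hx'' t ht0.le).hasDerivAt hmem
    have hfd : HasDerivAt (fun τ => f (x τ)) ⟪f' (x t), x' t⟫ t := by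
      have hga : HasFDerivAt f ((InnerProductSpace.toDual ℝ H) (f' (x t))) (x t) :=
        (hgrad (x t)).hasFDerivAt
      have h2 := hga.comp_hasDerivAt t hxd
      simp at h2
      exact h2
    have hud : HasDerivAt u ((r-1) • x' t + (t • x'' t + (1:ℝ) • x' t)) t :=
      ((hxd.sub_const xstar).const_smul (r-1)).add ((hasDerivAt_id t).smul hvd)
    have h1 : HasDerivAt (fun τ => (r-1) * (τ^2 * (f (x τ) - f xstar)))
        ((r-1) * ((↑2 * t ^ 1) * (f (x t) - f xstar) + t^2 * ⟪f' (x t), x' t⟫)) t :=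
      ((hasDerivAt_pow 2 t).mul (hfd.sub_const (f xstar))).const_mul (r-1)
    have h2 : HasDerivAt (fun τ => ⟪u τ, u τ⟫)
        (⟪u t, (r-1) • x' t + (t • x'' t + (1:ℝ) • x' t)⟫
          + ⟪(r-1) • x' t + (t • x'' t + (1:ℝ) • x' t), u t⟫) t :=
      hud.inner ℝ hud
    have h3 : HasDerivAt (fun τ => (r-3)/2 * (τ^2 * ⟪x' τ, x' τ⟫))
        ((r-3)/2 * ((↑2 * t ^ 1) * ⟪x' t, x' t⟫
          + t^2 * (⟪x' t, x'' t⟫ + ⟪x'' t, x' t⟫))) t :=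
      ((hasDerivAt_pow 2 t).mul (hvd.inner ℝ hvd)).const_mul ((r-3)/2)
    have hsum := (h1.add h2).add h3
    convert hsum using 1
    · rfl
    · rfl
    · rfl
    -- scalar identity
    have hAv : x'' t = -((r / t) • x' t) - f' (x t)
        - ((r-3)/t * (‖x' t‖/‖f' (x t)‖)) • f' (x t) := by
      have h := hode t ht
      rw [smul_smul] at h
      linear_combination (norm := module) h
    rw [hD, hu, hAv]
    simp only [inner_add_left, inner_add_right, inner_sub_left, inner_sub_right,
      inner_neg_left, inner_neg_right, real_inner_smul_left, real_inner_smul_right]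
    rw [real_inner_comm (f' (x t)) (x' t), real_inner_comm (f' (x t)) (x t),
      real_inner_comm (f' (x t)) xstar, real_inner_comm (x' t) (x t),
      real_inner_comm (x' t) xstar]
    field_simp
    ring
  -- D ≤ 0 on Ioi 0
  have hDle : ∀ t ∈ Ioi (0:ℝ), D t ≤ 0 := by
    intro t ht
    have ht0 : (0:ℝ) < t := ht
    have hgne := hgradne t ht
    have hg0 : (0:ℝ) < ‖f' (x t)‖ := norm_pos_iff.2 hgne
    have hF : 0 ≤ f (x t) - f xstar := by linarith [hmin (x t)]
    have hFP : f (x t) - f xstar ≤ ⟪x t - xstar, f' (x t)⟫ := by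
      have h := grad_convex_sub hconv (b := xstar) (hgrad (x t))
      have hc : ⟪f' (x t), xstar - x t⟫ = -⟪x t - xstar, f' (x t)⟫ := by
        rw [real_inner_comm]
        simp [inner_sub_left]
      rw [hc] at h
      linarith
    have hP0 : 0 ≤ ⟪x t - xstar, f' (x t)⟫ := le_trans hF hFP
    have hw : 0 ≤ ‖x' t‖ / ‖f' (x t)‖ := div_nonneg (norm_nonneg _) (norm_nonneg _)
    have hwQ : 0 ≤ ‖x' t‖/‖f' (x t)‖ * ⟪x' t, f' (x t)⟫ + ⟪x' t, x' t⟫ := by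
      have habs := abs_real_inner_le_norm (x' t) (f' (x t))
      have h1 : -(‖x' t‖ * ‖f' (x t)‖) ≤ ⟪x' t, f' (x t)⟫ := (abs_le.1 habs).1
      have key : ‖x' t‖/‖f' (x t)‖ * (‖x' t‖ * ‖f' (x t)‖) = ‖x' t‖^2 := by
        field_simp
      have hvv : ⟪x' t, x' t⟫ = ‖x' t‖^2 := real_inner_self_eq_norm_sq (x' t)
      nlinarith [mul_le_mul_of_nonneg_left h1 hw]
    have hint1 : 2*(r-1)*t*(f (x t) - f xstar) ≤ 2*(r-1)*t*⟪x t - xstar, f' (x t)⟫ := by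
      apply mul_le_mul_of_nonneg_left hFP
      positivity
    have hint2 : 0 ≤ 2*(r-1)*(r-3)*((‖x' t‖/‖f' (x t)‖)*⟪x t - xstar, f' (x t)⟫) := by
      apply mul_nonneg (by positivity) (mul_nonneg hw hP0)
    have hint3 : 0 ≤ (r-1)*(r-3)*t*((‖x' t‖/‖f' (x t)‖)*⟪x' t, f' (x t)⟫ + ⟪x' t, x' t⟫) := by
      apply mul_nonneg (by positivity) hwQ
    rw [hD]
    dsimp only
    linarith
  -- continuity of E on Ici 0
  have cx : ContinuousOn x (Ici 0) := fun s hs => ((hx' s hs).differentiableWithinAt).continuousWithinAt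
  have cv : ContinuousOn x' (Ici 0) := fun s hs => ((hx'' s hs).differentiableWithinAt).continuousWithinAt
  have cf : Continuous f := by
    have : Differentiable ℝ f := fun z => ((hgrad z).hasFDerivAt).differentiableAt
    exact this.continuous
  have cu : ContinuousOn u (Ici 0) :=
    (continuousOn_const.smul (cx.sub continuousOn_const)).add (continuousOn_id.smul cv)
  have contE : ContinuousOn E (Ici 0) := by
    apply ContinuousOn.add
    apply ContinuousOn.add
    · exact continuousOn_const.mul (((continuous_pow 2).continuousOn).mul
        ((cf.comp_continuousOn cx).sub continuousOn_const))
    · exact cu.inner cu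
    · exact continuousOn_const.mul (((continuous_pow 2).continuousOn).mul (cv.inner cv))
  -- antitone
  have hanti : AntitoneOn E (Ici 0) := by
    apply antitoneOn_of_deriv_nonpos (convex_Ici 0) contE
    · intro s hs
      rw [interior_Ici] at hs
      exact (hderiv s hs).differentiableAt.differentiableWithinAt
    · intro s hs
      rw [interior_Ici] at hs
      rw [(hderiv s hs).deriv]
      exact hDle s hs
  -- conclusion
  have hu0 : u 0 = (r-1) • (x₀ - xstar) := by rw [hu]; simp [hx0]
  have hE0 : E 0 = (r-1)^2 * ‖x₀ - xstar‖^2 := by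
    have e1 : E 0 = ⟪u 0, u 0⟫ := by rw [hE]; simp
    rw [e1, hu0, real_inner_smul_left, real_inner_smul_right, real_inner_self_eq_norm_sq]
    ring
  intro t ht
  have ht0 : (0:ℝ) < t := ht
  have hEt : E t ≤ E 0 := hanti self_mem_Ici (mem_Ici.2 ht0.le) ht0.le
  have hlow : (r-1) * (t^2 * (f (x t) - f xstar)) ≤ E t := by
    have h1 : (0:ℝ) ≤ ⟪u t, u t⟫ := real_inner_self_nonneg
    have h2 : (0:ℝ) ≤ ⟪x' t, x' t⟫ := real_inner_self_nonneg
    have h3 : (0:ℝ) ≤ (r-3)/2 * (t^2 * ⟪x' t, x' t⟫) := by positivity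
    rw [hE]
    dsimp only
    linarith
  rw [le_div_iff₀ (by positivity : (0:ℝ) < t^2)]
  have hkey : (r-1) * (t^2 * (f (x t) - f xstar)) ≤ (r-1) * ((r-1) * ‖x₀ - xstar‖^2) := by
    rw [hE0] at hEt
    nlinarith [hlow, hEt]
  have := le_of_mul_le_mul_left (by linarith : (r-1) * (t^2 * (f (x t) - f xstar)) ≤ (r-1) * ((r-1) * ‖x₀ - xstar‖^2)) hr1
  nlinarith [this]
end aux

/-- `O(1/t²)` convergence rate of the FISC-ODE: if `x` is a twice continuously
differentiable solution of `ẍ + (r/t)ẋ + ∇f(x) + ((r-3)/t)(‖ẋ‖/‖∇f(x)‖)∇f(x) = 0`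
on `(0,∞)` with initial conditions `x(0) = x₀`, `ẋ(0) = 0`, then for all `t > 0`,
`f(x(t)) - f(x*) ≤ (r-1)‖x₀ - x*‖²/t²`. -/
theorem fisc_ode_convergence_rate {H : Type*} [NormedAddCommGroup H]
    [InnerProductSpace ℝ H] [CompleteSpace H]
    (f : H → ℝ) (f' : H → H)
    (hconv : ConvexOn ℝ Set.univ f)
    (hgrad : ∀ z, HasGradientAt f (f' z) z)
    (hbdd : BddBelow (Set.range f))
    (xstar : H) (hmin : ∀ z, f xstar ≤ f z)
    (huniq : ∀ z, (∀ w, f z ≤ f w) → z = xstar)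
    (r : ℝ) (hr : 3 ≤ r)
    (x x' x'' : ℝ → H)
    (hx' : ∀ t ∈ Ici (0 : ℝ), HasDerivWithinAt x (x' t) (Ici 0) t)
    (hx'' : ∀ t ∈ Ici (0 : ℝ), HasDerivWithinAt x' (x'' t) (Ici 0) t)
    (hx''cont : ContinuousOn x'' (Ici 0))
    (hgradne : ∀ t ∈ Ioi (0 : ℝ), f' (x t) ≠ 0)
    (hode : ∀ t ∈ Ioi (0 : ℝ),
      x'' t + (r / t) • x' t + f' (x t)
        + ((r - 3) / t) • ((‖x' t‖ / ‖f' (x t)‖) • f' (x t)) = 0)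
    (x₀ : H) (hx0 : x 0 = x₀) (hv0 : x' 0 = 0) :
    ∀ t ∈ Ioi (0 : ℝ), f (x t) - f xstar ≤ (r - 1) * ‖x₀ - xstar‖ ^ 2 / t ^ 2 :=
  fisc_main f f' hconv hgrad xstar hmin r hr x x' x'' hx' hx'' hgradne hode x₀ hx0 hv0
end

section
/- Let u, g ∈ H with g ≠ 0, let 0 ≤ β ≤ 1 and 0 ≤ γ ≤ 1, and suppose the restarting criterion holds: ⟨-g, u⟩ ≥ 0. Define the corrected search direction u' = (1-β)u - γ(‖u‖/‖g‖)g - g. Then ⟨u', -g⟩ ≥ ‖g‖². (In particular, with g = ∇f(x_k) and u = u_k, the SDC update u_{k+1} satisfies ⟨u_{k+1}, -∇f(x_k)⟩ ≥ ‖∇f(x_k)‖²; the same inequality holds trivially for the restart update u' = -g.) -/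
open RealInnerProductSpace

/-- One-step form of the SDC velocity update: if the restarting criterion
`⟪-g, u⟫ ≥ 0` holds, then the corrected search direction
`u' = (1-β)u - γ(‖u‖/‖g‖)g - g` satisfies `⟪u', -g⟫ ≥ ‖g‖²`. -/
theorem sdc_descent_direction {H : Type*} [NormedAddCommGroup H] [InnerProductSpace ℝ H]
    (u g : H) (hg : g ≠ 0) (β γ : ℝ)
    (hβ0 : 0 ≤ β) (hβ1 : β ≤ 1) (hγ0 : 0 ≤ γ) (hγ1 : γ ≤ 1)
    (hrst : ⟪-g, u⟫ ≥ 0) :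
    ⟪(1 - β) • u - (γ * (‖u‖ / ‖g‖)) • g - g, -g⟫ ≥ ‖g‖ ^ 2 := by
  have hgg : ⟪g, g⟫ = ‖g‖ ^ 2 := real_inner_self_eq_norm_sq g
  have hgu : ⟪g, u⟫ ≤ 0 := by
    have := hrst
    rw [inner_neg_left] at this
    linarith
  simp only [inner_sub_left, inner_smul_left, inner_neg_right, conj_trivial,
    real_inner_comm u g, hgg]
  have hgu' : ⟪u, g⟫ ≤ 0 := by rw [real_inner_comm]; exact hgu
  have h2 : 0 ≤ γ * (‖u‖ / ‖g‖) * ‖g‖ ^ 2 := by positivity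
  nlinarith [mul_nonneg (by linarith : (0:ℝ) ≤ 1 - β) (by linarith : (0:ℝ) ≤ -⟪u, g⟫)]
end

section
/- Let d_f > 1 and let K' be a positive integer. Let (x_k) and (u_k) be sequences in H with ∇f(x_k) ≠ 0 for 0 ≤ k ≤ K', with u₁ = -∇f(x₀), and suppose that for every 1 ≤ k ≤ K' both ⟨-∇f(x_k), u_k⟩ ≥ 0 and d_f‖∇f(x_k)‖ ≥ ‖∇f(x_{k-1})‖ hold, and u_{k+1} = (1-β_k)u_k - γ_k(‖u_k‖/‖∇f(x_k)‖)∇f(x_k) - ∇f(x_k) with 0 ≤ β_k ≤ 1 and 0 ≤ γ_k ≤ 1. Define λ_k = ‖u_{k+1}‖/‖∇f(x_k)‖ and the auxiliary sequence (λ̃_k) by λ̃₀ = 1 and λ̃_k = √(4 d_f² λ̃_{k-1}² + 4 d_f λ̃_{k-1} + 2). Then λ_k ≤ λ̃_k for all 0 ≤ k ≤ K'; in particular, ‖u_{k+1}‖/‖∇f(x_k)‖ is bounded above by λ̃_{K'} for all 0 ≤ k ≤ K'. -/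
open RealInnerProductSpace

/-- Boundedness of `‖u_{k+1}‖/‖∇f(x_k)‖` for SDC iterations without restart:
if the restarting criterion and the gradient-ratio criterion hold for `1 ≤ k ≤ K'`,
then `λ_k = ‖u_{k+1}‖/‖∇f(x_k)‖` is dominated by the auxiliary sequence
`λ̃₀ = 1`, `λ̃_k = √(4 d_f² λ̃_{k-1}² + 4 d_f λ̃_{k-1} + 2)`. -/
theorem sdc_direction_ratio_bounded {H : Type*} [NormedAddCommGroup H]
    [InnerProductSpace ℝ H] [CompleteSpace H]
    (f : H → ℝ) (f' : H → H)
    (hgrad : ∀ z, HasGradientAt f (f' z) z)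
    (d_f : ℝ) (hd : 1 < d_f) (K' : ℕ) (hK' : 1 ≤ K')
    (x u : ℕ → H) (β γ : ℕ → ℝ)
    (hne : ∀ k, k ≤ K' → f' (x k) ≠ 0)
    (hu1 : u 1 = -f' (x 0))
    (hrst : ∀ k, 1 ≤ k → k ≤ K' → ⟪-f' (x k), u k⟫ ≥ 0)
    (hratio : ∀ k, 1 ≤ k → k ≤ K' → d_f * ‖f' (x k)‖ ≥ ‖f' (x (k - 1))‖)
    (hβ : ∀ k, 1 ≤ k → k ≤ K' → 0 ≤ β k ∧ β k ≤ 1)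
    (hγ : ∀ k, 1 ≤ k → k ≤ K' → 0 ≤ γ k ∧ γ k ≤ 1)
    (hupd : ∀ k, 1 ≤ k → k ≤ K' →
      u (k + 1) = (1 - β k) • u k - (γ k * (‖u k‖ / ‖f' (x k)‖)) • f' (x k) - f' (x k))
    (lamt : ℕ → ℝ)
    (hlamt0 : lamt 0 = 1)
    (hlamt : ∀ k, 1 ≤ k →
      lamt k = Real.sqrt (4 * d_f ^ 2 * lamt (k - 1) ^ 2 + 4 * d_f * lamt (k - 1) + 2)) :
    (∀ k, k ≤ K' → ‖u (k + 1)‖ / ‖f' (x k)‖ ≤ lamt k) ∧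
      (∀ k, k ≤ K' → ‖u (k + 1)‖ / ‖f' (x k)‖ ≤ lamt K') := by

  have hnn : ∀ k, 0 ≤ lamt k := by
    intro k
    cases k with
    | zero => rw [hlamt0]; norm_num
    | succ n =>
      rw [hlamt (n+1) (Nat.le_add_left 1 n)]
      exact Real.sqrt_nonneg _
  have hmono : ∀ k, lamt k ≤ lamt (k + 1) := by
    intro k
    have h := hlamt (k+1) (Nat.le_add_left 1 k)
    simp only [Nat.add_sub_cancel] at h
    rw [h]
    have ht := hnn k
    rw [Real.le_sqrt ht]
    · nlinarith [mul_nonneg (sq_nonneg (lamt k)) (by nlinarith : (0:ℝ) ≤ d_f^2 - 1),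
        mul_nonneg (le_of_lt (lt_trans zero_lt_one hd)) ht]
    · nlinarith [sq_nonneg (d_f * lamt k),
        mul_nonneg (le_of_lt (lt_trans zero_lt_one hd)) ht]
  have hmono' : ∀ m n : ℕ, m ≤ n → lamt m ≤ lamt n := by
    intro m n hmn
    induction n with
    | zero => simp_all
    | succ p ih =>
      rcases Nat.lt_or_ge m (p+1) with h | h
      · exact le_trans (ih (Nat.lt_succ_iff.mp h)) (hmono p)
      · have : m = p + 1 := le_antisymm hmn h
        rw [this]
  have key : ∀ k, k ≤ K' → ‖u (k + 1)‖ / ‖f' (x k)‖ ≤ lamt k := by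
    intro k
    induction k with
    | zero =>
      intro _
      rw [hu1, norm_neg, hlamt0]
      have := hne 0 (Nat.zero_le K')
      rw [div_self (norm_ne_zero_iff.mpr this)]
    | succ n ih =>
      intro hle
      have hle' : n ≤ K' := Nat.le_of_succ_le hle
      have ih' := ih hle'
      have h1 : (1:ℕ) ≤ n + 1 := Nat.le_add_left 1 n
      have hgpos : (0:ℝ) < ‖f' (x (n+1))‖ :=
        norm_pos_iff.mpr (hne (n+1) hle)
      have hgpos' : (0:ℝ) < ‖f' (x n)‖ := norm_pos_iff.mpr (hne n hle')
      have hβ' := hβ (n+1) h1 hle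
      have hγ' := hγ (n+1) h1 hle
      have hupd' := hupd (n+1) h1 hle
      have hr := hratio (n+1) h1 hle
      simp only [Nat.add_sub_cancel] at hr
      -- triangle inequality bound
      have hnormu : ‖u (n+2)‖ ≤ (1 - β (n+1)) * ‖u (n+1)‖
          + γ (n+1) * ‖u (n+1)‖ + ‖f' (x (n+1))‖ := by
        rw [hupd']
        have t1 : ‖(1 - β (n+1)) • u (n+1) - (γ (n+1) * (‖u (n+1)‖ / ‖f' (x (n+1))‖)) • f' (x (n+1)) - f' (x (n+1))‖
            ≤ ‖(1 - β (n+1)) • u (n+1)‖ + ‖(γ (n+1) * (‖u (n+1)‖ / ‖f' (x (n+1))‖)) • f' (x (n+1))‖ + ‖f' (x (n+1))‖ := by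
          calc _ ≤ ‖(1 - β (n+1)) • u (n+1) - (γ (n+1) * (‖u (n+1)‖ / ‖f' (x (n+1))‖)) • f' (x (n+1))‖ + ‖f' (x (n+1))‖ := norm_sub_le _ _
          _ ≤ _ := by gcongr; exact norm_sub_le _ _
        refine t1.trans ?_
        rw [norm_smul, norm_smul, Real.norm_eq_abs, Real.norm_eq_abs,
          abs_of_nonneg (by linarith [hβ'.2]),
          abs_of_nonneg (mul_nonneg hγ'.1 (by positivity))]
        have : γ (n+1) * (‖u (n+1)‖ / ‖f' (x (n+1))‖) * ‖f' (x (n+1))‖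
            = γ (n+1) * ‖u (n+1)‖ := by
          field_simp
        rw [this]
      have hu_le : ‖u (n+1)‖ ≤ lamt n * ‖f' (x n)‖ :=
        (div_le_iff₀ hgpos').mp ih'
      have hfx : ‖f' (x n)‖ ≤ d_f * ‖f' (x (n+1))‖ := hr
      have hstep : ‖u (n+2)‖ ≤ (2 * d_f * lamt n + 1) * ‖f' (x (n+1))‖ := by
        have h2 : ‖u (n+1)‖ ≤ d_f * lamt n * ‖f' (x (n+1))‖ := by
          calc ‖u (n+1)‖ ≤ lamt n * ‖f' (x n)‖ := hu_le
          _ ≤ lamt n * (d_f * ‖f' (x (n+1))‖) := by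
              exact mul_le_mul_of_nonneg_left hfx (hnn n)
          _ = d_f * lamt n * ‖f' (x (n+1))‖ := by ring
        nlinarith [hβ'.1, hβ'.2, hγ'.1, hγ'.2, norm_nonneg (u (n+1)), hnn n,
          mul_nonneg (mul_nonneg (le_of_lt (lt_trans zero_lt_one hd)) (hnn n)) hgpos.le]
      have hlam : 2 * d_f * lamt n + 1 ≤ lamt (n+1) := by
        have h := hlamt (n+1) h1
        simp only [Nat.add_sub_cancel] at h
        rw [h]
        have : (2 * d_f * lamt n + 1) = Real.sqrt ((2 * d_f * lamt n + 1)^2) := by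
          rw [Real.sqrt_sq (by nlinarith [hnn n])]
        rw [this]
        apply Real.sqrt_le_sqrt
        nlinarith [hnn n]
      rw [div_le_iff₀ hgpos]
      calc ‖u (n+1+1)‖ ≤ (2 * d_f * lamt n + 1) * ‖f' (x (n+1))‖ := hstep
      _ ≤ lamt (n+1) * ‖f' (x (n+1))‖ := by gcongr
  exact ⟨key, fun k hk => (key k hk).trans (hmono' k K' hk)⟩
end

section
/- Under the FISC-ns recursion, for every k ≥ 1 the following identity holds: w_k = (φ_k/(r-1))Δx_k + α r_{k-1} + ξ_k s∇f(y_{k-1}). -/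
open RealInnerProductSpace
open scoped Classical

theorem fisc_ns_w_identity {H : Type*} [NormedAddCommGroup H]
    [InnerProductSpace ℝ H] [CompleteSpace H]
    (f : H → ℝ) (f' : H → H) (L : ℝ) (hL : 0 < L)
    (hconv : ConvexOn ℝ Set.univ f)
    (hgrad : ∀ z, HasGradientAt f (f' z) z)
    (hlip : LipschitzWith (Real.toNNReal L) f')
    (hbdd : BddBelow (Set.range f))
    (xstar : H) (hmin : ∀ z, f xstar ≤ f z)
    (r s : ℝ) (hr : 3 ≤ r) (hs : 0 < s) (hsL : s ≤ 1 / L)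
    -- FISC-ns sequences; `x k` for `k : ℕ` denotes `x_k`, and `x (k-1)` with
    -- truncated subtraction encodes `x_{-1} = x₀` at `k = 0`.
    (x y rk : ℕ → H)
    (hne : ∀ k : ℕ, x k - x (k - 1) ≠ 0 → f' (x k) ≠ 0)
    (hrk : ∀ k : ℕ, rk k = if f' (x k) ≠ 0 ∧ x k - x (k - 1) ≠ 0
        then (‖x k - x (k - 1)‖ / ‖f' (x k)‖) • f' (x k) else 0)
    (hy : ∀ k : ℕ, y k = x k + (((k : ℝ) - 1) / ((k : ℝ) - 1 + r)) • (x k - x (k - 1))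
        - ((r - 3) / ((k : ℝ) - 1 + r)) • rk k)
    (hx : ∀ k : ℕ, x (k + 1) = y k - s • f' (y k))
    (z w : ℕ → H)
    (hz : ∀ k : ℕ, z k = x k + (((k : ℝ) - 1) / (r - 1)) • (x k - x (k - 1)))
    (hw : ∀ k : ℕ, w k = z k + z (k - 1) - x k - x (k - 1))
    (k : ℕ) (hk : 1 ≤ k) :
    w k = ((2 * (k : ℝ) + r - 3) / (r - 1)) • (x k - x (k - 1))
        + ((r - 3) / (r - 1)) • rk (k - 1)
        + (((((k : ℝ) + r - 2) / (r - 1)) * s) • f' (y (k - 1))) := by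
  obtain ⟨m, rfl⟩ : ∃ m, k = m + 1 := ⟨k - 1, (Nat.succ_pred_eq_of_pos hk).symm⟩
  have hd : (m : ℝ) - 1 + r ≠ 0 := by
    have : (0:ℝ) ≤ (m:ℝ) := Nat.cast_nonneg m
    intro h; linarith
  have he : r - 1 ≠ 0 := by intro h; linarith
  rw [hw]
  simp only [Nat.add_sub_cancel]
  rw [hz (m+1), hz m, hx m, hy m]
  simp only [Nat.add_sub_cancel]
  push_cast
  match_scalars <;> field_simp <;> ring
end

section
/- Under the FISC-ns recursion, for every k ≥ 1 the following inequality holds: φ_k‖Δx_k‖² + (r-3)‖r_{k-1}‖² + 2(r-1)ξ_k ⟨r_{k-1}, Δx_k + s∇f(y_{k-1})⟩ ≥ φ_k‖Δx_k‖² - (φ_{k-1} - 2)‖Δx_{k-1}‖². -/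
open RealInnerProductSpace
open scoped Classical

theorem fisc_ns_L1_part_inequality {H : Type*} [NormedAddCommGroup H]
    [InnerProductSpace ℝ H] [CompleteSpace H]
    (f : H → ℝ) (f' : H → H) (L : ℝ) (hL : 0 < L)
    (hconv : ConvexOn ℝ Set.univ f)
    (hgrad : ∀ z, HasGradientAt f (f' z) z)
    (hlip : LipschitzWith (Real.toNNReal L) f')
    (hbdd : BddBelow (Set.range f))
    (xstar : H) (hmin : ∀ z, f xstar ≤ f z)
    (r s : ℝ) (hr : 3 ≤ r) (hs : 0 < s) (hsL : s ≤ 1 / L)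
    -- FISC-ns sequences; `x k` for `k : ℕ` denotes `x_k`, and `x (k-1)` with
    -- truncated subtraction encodes `x_{-1} = x₀` at `k = 0`.
    (x y rk : ℕ → H)
    (hne : ∀ k : ℕ, x k - x (k - 1) ≠ 0 → f' (x k) ≠ 0)
    (hrk : ∀ k : ℕ, rk k = if f' (x k) ≠ 0 ∧ x k - x (k - 1) ≠ 0
        then (‖x k - x (k - 1)‖ / ‖f' (x k)‖) • f' (x k) else 0)
    (hy : ∀ k : ℕ, y k = x k + (((k : ℝ) - 1) / ((k : ℝ) - 1 + r)) • (x k - x (k - 1))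
        - ((r - 3) / ((k : ℝ) - 1 + r)) • rk k)
    (hx : ∀ k : ℕ, x (k + 1) = y k - s • f' (y k))
    (k : ℕ) (hk : 1 ≤ k) :
    (2 * (k : ℝ) + r - 3) * ‖x k - x (k - 1)‖ ^ 2 + (r - 3) * ‖rk (k - 1)‖ ^ 2
        + 2 * (r - 1) * (((k : ℝ) + r - 2) / (r - 1))
          * ⟪rk (k - 1), (x k - x (k - 1)) + s • f' (y (k - 1))⟫
      ≥ (2 * (k : ℝ) + r - 3) * ‖x k - x (k - 1)‖ ^ 2
        - ((2 * ((k : ℝ) - 1) + r - 3) - 2) * ‖x (k - 1) - x (k - 1 - 1)‖ ^ 2 := by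

  rcases Nat.lt_or_ge k 2 with hk2 | hk2
  · -- k = 1 case
    interval_cases k
    have h0 : x 0 - x (0 - 1) = (0:H) := by
      norm_num
    have hr0 : rk 0 = 0 := by
      rw [hrk 0]
      simp [h0]
    simp only [show (1:ℕ) - 1 = 0 from rfl, hr0, h0]
    simp
  · obtain ⟨j, rfl⟩ : ∃ j, k = j + 1 := ⟨k - 1, (Nat.succ_pred_eq_of_pos (by omega)).symm⟩
    have hj : 1 ≤ j := by omega
    have hjR : (1:ℝ) ≤ (j:ℝ) := by exact_mod_cast hj
    have hd0 : (0:ℝ) < (j:ℝ) - 1 + r := by linarith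
    have hd : ((j:ℝ) - 1 + r) ≠ 0 := ne_of_gt hd0
    have hr1 : r - 1 ≠ 0 := by
      intro h; linarith
    -- norm equality ‖rk j‖ = ‖Δx_j‖
    have hn : ‖rk j‖ = ‖x j - x (j - 1)‖ := by
      rw [hrk j]
      by_cases h : f' (x j) ≠ 0 ∧ x j - x (j - 1) ≠ 0
      · rw [if_pos h, norm_smul, Real.norm_eq_abs, abs_div, abs_norm, abs_norm,
          div_mul_cancel₀]
        exact norm_ne_zero_iff.mpr h.1
      · rw [if_neg h]
        push_neg at h
        by_cases hΔ : x j - x (j - 1) = 0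
        · simp [hΔ]
        · exact absurd (h (hne j hΔ)) hΔ
    have hvec : x (j + 1) - x j + s • f' (y j)
        = (((j:ℝ) - 1) / ((j:ℝ) - 1 + r)) • (x j - x (j - 1))
          - ((r - 3) / ((j:ℝ) - 1 + r)) • rk j := by
      rw [hx j, hy j]
      module
    have hip : ⟪rk j, x (j + 1) - x j + s • f' (y j)⟫
        = (((j:ℝ) - 1) / ((j:ℝ) - 1 + r)) * ⟪rk j, x j - x (j - 1)⟫
          - ((r - 3) / ((j:ℝ) - 1 + r)) * ‖rk j‖ ^ 2 := by
      rw [hvec, inner_sub_right, real_inner_smul_right, real_inner_smul_right,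
        real_inner_self_eq_norm_sq]
    have hI : -(‖rk j‖ * ‖x j - x (j - 1)‖) ≤ ⟪rk j, x j - x (j - 1)⟫ :=
      neg_le_of_abs_le (abs_real_inner_le_norm _ _)
    rw [hn] at hI
    have hIM : 0 ≤ ⟪rk j, x j - x (j - 1)⟫ + ‖x j - x (j - 1)‖ ^ 2 := by
      nlinarith [hI]
    have hcoef : 2 * (r - 1) * (((j:ℝ) + 1 + r - 2) / (r - 1))
          * ((((j:ℝ) - 1) / ((j:ℝ) - 1 + r)) * ⟪rk j, x j - x (j - 1)⟫
            - ((r - 3) / ((j:ℝ) - 1 + r)) * ‖rk j‖ ^ 2)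
        = 2 * ((j:ℝ) - 1) * ⟪rk j, x j - x (j - 1)⟫ - 2 * (r - 3) * ‖rk j‖ ^ 2 := by
      field_simp
      ring
    simp only [Nat.add_sub_cancel]
    push_cast
    rw [hip]
    have hN2 : ‖rk j‖ ^ 2 = ‖x j - x (j - 1)‖ ^ 2 := by rw [hn]
    nlinarith [hcoef, mul_nonneg (by linarith : (0:ℝ) ≤ (j:ℝ) - 1) hIM, hN2]
end
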